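/- arXiv:1003.6106 — 2 statements merged into one kernel-verified Lean document; each statement's English description precedes it below -/
import Mathlib

section
/- Every derivation of the matrix algebra M_n(ℂ) (n ≥ 1) is inner, i.e., for every derivation D : M_n(ℂ) → M_n(ℂ) there exists a matrix γ ∈ M_n(ℂ) with D(a) = γa − aγ for all a. -/
open Matrix Finset

theorem derivation_matrix_inner (n : ℕ) (hn : 1 ≤ n)
    (D : Matrix (Fin n) (Fin n) ℂ →ₗ[ℂ] Matrix (Fin n) (Fin n) ℂ)
    (hD : ∀ a b, D (a * b) = D a * b + a * D b) :
    ∃ γ : Matrix (Fin n) (Fin n) ℂ, ∀ a, D a = γ * a - a * γ := by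
  set z : Fin n := ⟨0, hn⟩
  set E : Fin n → Fin n → Matrix (Fin n) (Fin n) ℂ :=
    fun i j => Matrix.single i j 1 with hE
  have hone : (∑ k, E k z * E z k) = 1 := by
    have h1 : (∑ k, E k z * E z k) = ∑ k : Fin n, Matrix.single k k (1 : ℂ) := by
      simp only [hE, Matrix.single_mul_single_same, one_mul]
    rw [h1]
    ext i j
    rw [Matrix.sum_apply]
    simp only [Matrix.single, Matrix.of_apply, Matrix.one_apply]
    by_cases h : i = j
    · subst h; simp
    · rw [if_neg h]
      apply Finset.sum_eq_zero
      intro x _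
      rw [if_neg]
      rintro ⟨rfl, rfl⟩
      exact h rfl
  set γ : Matrix (Fin n) (Fin n) ℂ := ∑ k, D (E k z) * E z k with hγ
  have key : ∀ i j, D (E i j) = γ * E i j - E i j * γ := by
    intro i j
    have h1 : γ * E i j = D (E i z) * E z j := by
      rw [hγ, Finset.sum_mul]
      rw [Finset.sum_eq_single i]
      · rw [mul_assoc, hE]; simp
      · intro k _ hk
        simp only [hE, mul_assoc]
        rw [Matrix.single_mul_single_of_ne 1 z k i hk, mul_zero]
      · simp
    have h2 : E i j * γ = D (E i z) * E z j - D (E i j) := by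
      rw [hγ, Finset.mul_sum]
      have : ∀ k, E i j * (D (E k z) * E z k)
          = ((if j = k then D (E i z) else 0) - D (E i j) * E k z) * E z k := by
        intro k
        have := hD (E i j) (E k z)
        by_cases hjk : j = k
        · subst hjk
          rw [hE] at this ⊢
          simp only [Matrix.single_mul_single_same, one_mul] at this
          rw [← mul_assoc]
          rw [if_pos rfl]
          have h3 : Matrix.single i j 1 * D (Matrix.single j z 1)
              = D (Matrix.single i z 1)
                - D (Matrix.single i j 1) * Matrix.single j z 1 := by
            rw [this]; abel
          rw [h3]
        · rw [if_neg hjk]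
          rw [hE] at this
          simp only [] at this
          rw [Matrix.single_mul_single_of_ne 1 i j k hjk] at this
          rw [map_zero] at this
          have h3 : (Matrix.single i j 1 : Matrix (Fin n) (Fin n) ℂ)
              * D (Matrix.single k z 1)
              = 0 - D (Matrix.single i j 1) * Matrix.single k z 1 := by
            rw [zero_sub, ← neg_eq_iff_add_eq_zero.mpr this.symm]
          rw [hE, ← mul_assoc, h3]
      rw [Finset.sum_congr rfl fun k _ => this k]
      simp only [sub_mul, ite_mul, zero_mul]
      rw [Finset.sum_sub_distrib]
      rw [Finset.sum_ite_eq Finset.univ j fun x => D (E i z) * E z x]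
      simp only [Finset.mem_univ, if_true]
      congr 1
      simp only [mul_assoc]
      rw [← Finset.mul_sum, hone, mul_one]
    rw [h1, h2]; abel
  refine ⟨γ, fun a => ?_⟩
  have ha := Matrix.matrix_eq_sum_single a
  calc D a = D (∑ i, ∑ j, Matrix.single i j (a i j)) := by rw [← ha]
    _ = ∑ i, ∑ j, D (Matrix.single i j (a i j)) := by simp [map_sum]
    _ = ∑ i, ∑ j, (γ * Matrix.single i j (a i j)
          - Matrix.single i j (a i j) * γ) := by
        refine Finset.sum_congr rfl fun i _ => Finset.sum_congr rfl fun j _ => ?_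
        have hsm : Matrix.single i j (a i j) = (a i j) • E i j := by
          rw [hE, Matrix.smul_single, smul_eq_mul, mul_one]
        rw [hsm, LinearMap.map_smul, key i j, smul_sub, mul_smul_comm, smul_mul_assoc]
    _ = γ * a - a * γ := by
        simp only [Finset.sum_sub_distrib, ← Finset.mul_sum, ← Finset.sum_mul, ← ha]
end

section
/- Let A be a Lie algebra over a commutative ring, L ⊆ A an ideal, and let ω be an L-valued alternating 1-form on A with ω(ℓ) = −ℓ for all ℓ ∈ L (a connection 1-form). Define R(X,Y) = (dω)(X,Y) + [ω(X), ω(Y)], where d is the Chevalley–Eilenberg differential for the adjoint action of A on L. Then R is horizontal: R(ℓ, Y) = 0 for all ℓ ∈ L and Y ∈ A. -/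
/-- The curvature of a connection 1-form on a Lie algebra with ideal `I` is horizontal. -/
theorem curvature_horizontal {R A : Type*} [CommRing R] [LieRing A] [LieAlgebra R A]
    (I : LieIdeal R A) (ω : A →ₗ[R] A)
    (hmem : ∀ x, ω x ∈ I) (hnorm : ∀ ℓ ∈ I, ω ℓ = -ℓ) :
    ∀ ℓ ∈ I, ∀ Y : A,
      ⁅ℓ, ω Y⁆ - ⁅Y, ω ℓ⁆ - ω ⁅ℓ, Y⁆ + ⁅ω ℓ, ω Y⁆ = 0 := by
  intro ℓ hℓ Y
  rw [hnorm ℓ hℓ, hnorm ⁅ℓ, Y⁆ (lie_mem_left R A I ℓ Y hℓ)]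
  simp only [lie_neg, neg_lie, neg_neg, ← lie_skew ℓ Y, ← lie_skew ℓ (ω Y)]; abel
end
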